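/- Let L > μ > 0, and let θ : R^n × R^m → R be differentiable with x ↦ θ(x, y) convex for each y, satisfying for all (x0,y0), (x,y): θ(x,y) ≤ θ(x0,y0) + ⟨∇_x θ(x0,y0), x−x0⟩ + ⟨∇_y θ(x0,y0), y−y0⟩ + (L/2)‖y−y0‖² + ((L−μ)/2)‖x−x0‖². If x* minimizes x ↦ θ(x, y*), then for every (x1, y1): θ(x*, y*) ≤ θ(x1, y1) + ⟨∇_y θ(x1,y1), y* − y1⟩ + (L/2)‖y* − y1‖² − ‖∇_x θ(x1,y1)‖² / (2(L−μ)). -/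
import Mathlib


open RealInnerProductSpace

noncomputable def gradX {n m : ℕ}
    (f : EuclideanSpace ℝ (Fin n) × EuclideanSpace ℝ (Fin m) → ℝ)
    (x : EuclideanSpace ℝ (Fin n)) (y : EuclideanSpace ℝ (Fin m)) :
    EuclideanSpace ℝ (Fin n) :=
  gradient (fun x' => f (x', y)) x

noncomputable def gradY {n m : ℕ}
    (f : EuclideanSpace ℝ (Fin n) × EuclideanSpace ℝ (Fin m) → ℝ)
    (x : EuclideanSpace ℝ (Fin n)) (y : EuclideanSpace ℝ (Fin m)) :
    EuclideanSpace ℝ (Fin m) :=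
  gradient (fun y' => f (x, y')) y
/-- Minimizing the quadratic upper bound over x yields the key lower bound. -/
theorem stmt14 (n m : ℕ) (μ L : ℝ) (hμ : 0 < μ) (hμL : μ < L)
    (θ : EuclideanSpace ℝ (Fin n) × EuclideanSpace ℝ (Fin m) → ℝ)
    (hθ : Differentiable ℝ θ)
    (hconv : ∀ y, ConvexOn ℝ Set.univ (fun x => θ (x, y)))
    (hub : ∀ (x0 x : EuclideanSpace ℝ (Fin n)) (y0 y : EuclideanSpace ℝ (Fin m)),
      θ (x, y) ≤ θ (x0, y0) + ⟪gradX θ x0 y0, x - x0⟫ + ⟪gradY θ x0 y0, y - y0⟫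
        + L / 2 * ‖y - y0‖ ^ 2 + (L - μ) / 2 * ‖x - x0‖ ^ 2)
    (xs : EuclideanSpace ℝ (Fin n)) (ys : EuclideanSpace ℝ (Fin m))
    (hmin : ∀ x : EuclideanSpace ℝ (Fin n), θ (xs, ys) ≤ θ (x, ys)) :
    ∀ (x1 : EuclideanSpace ℝ (Fin n)) (y1 : EuclideanSpace ℝ (Fin m)),
      θ (xs, ys) ≤ θ (x1, y1) + ⟪gradY θ x1 y1, ys - y1⟫ + L / 2 * ‖ys - y1‖ ^ 2
        - ‖gradX θ x1 y1‖ ^ 2 / (2 * (L - μ)) := by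
  intro x1 y1
  have hLμ : (0:ℝ) < L - μ := by linarith
  set g := gradX θ x1 y1 with hg
  have h := hub x1 (x1 - (L - μ)⁻¹ • g) y1 ys
  have hx : x1 - (L - μ)⁻¹ • g - x1 = -((L - μ)⁻¹ • g) := by abel
  rw [hx] at h
  have hinner : ⟪g, -((L - μ)⁻¹ • g)⟫ = -((L - μ)⁻¹ * ‖g‖ ^ 2) := by
    rw [inner_neg_right, real_inner_smul_right, real_inner_self_eq_norm_sq]
  have hnorm : ‖(-((L - μ)⁻¹ • g))‖ ^ 2 = (L - μ)⁻¹ ^ 2 * ‖g‖ ^ 2 := by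
    rw [norm_neg, norm_smul, mul_pow, Real.norm_eq_abs, sq_abs]
  rw [hinner, hnorm] at h
  have := (hmin (x1 - (L - μ)⁻¹ • g)).trans h
  have heq : θ (x1, y1) + -((L - μ)⁻¹ * ‖g‖ ^ 2) + ⟪gradY θ x1 y1, ys - y1⟫
      + L / 2 * ‖ys - y1‖ ^ 2 + (L - μ) / 2 * ((L - μ)⁻¹ ^ 2 * ‖g‖ ^ 2)
      = θ (x1, y1) + ⟪gradY θ x1 y1, ys - y1⟫ + L / 2 * ‖ys - y1‖ ^ 2
        - ‖g‖ ^ 2 / (2 * (L - μ)) := by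
    field_simp
    ring
  linarith [heq ▸ this]
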